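/- (EGU as GD) For q(u) = (1/4) u ⊙ u on ℝ^k (componentwise square), the condition J_q(u) J_q(u)^T = diag(q(u)) holds, so if u(t) solves u̇ = -η ∇_u L((1/4)u^{⊙2}) then w(t) = (1/4) u(t)^{⊙2} solves the exponentiated gradient flow d/dt log(w_i(t)) = -η ∂_i L(w(t)) for each coordinate i. -/

import Mathlib

/-- EGU as GD: with `q(u) = ¼ u ⊙ u`, GD on `u` for the composite loss
simulates the exponentiated gradient flow on `w = ¼ u^{⊙2}`. -/
theorem egu_as_gd
    {d : ℕ}
    (gradL : (Fin d → ℝ) → (Fin d → ℝ))  -- the gradient ∇L of the loss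
    (η : ℝ) (hη : 0 < η)
    (u : ℝ → (Fin d → ℝ)) (u' : ℝ → (Fin d → ℝ))
    (hu0 : ∀ t i, u t i ≠ 0)
    (hu : ∀ t, HasDerivAt u (u' t) t)
    -- GD flow on u for L ∘ q, with ∇_u(L∘q)(u) = ½ u ⊙ ∇L(¼ u^{⊙2}):
    (hflow : ∀ t i, u' t i
        = -η * ((1 / 2) * u t i * gradL (fun j => (1 / 4) * (u t j) ^ 2) i)) :
    -- the condition J_q(u) J_q(u)ᵀ = diag(q(u)):
    (∀ v : Fin d → ℝ, ∀ i, ((1 / 2) * v i) * ((1 / 2) * v i) = (1 / 4) * (v i) ^ 2) ∧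
    -- w(t) = ¼ u(t)^{⊙2} follows the EGU flow d/dt log wᵢ = -η ∂ᵢL(w):
    (∀ t i, HasDerivAt (fun s => Real.log ((1 / 4) * (u s i) ^ 2))
        (-η * gradL (fun j => (1 / 4) * (u t j) ^ 2) i) t) := by
  constructor
  · intro v i; ring
  · intro t i
    have hui : HasDerivAt (fun s => u s i) (u' t i) t := hasDerivAt_pi.mp (hu t) i
    have hw : HasDerivAt (fun s => (1 / 4 : ℝ) * (u s i) ^ 2)
        ((1 / 4) * (2 * u t i * u' t i)) t := ((hui.pow 2).const_mul _).congr_deriv (by ring)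
    have hne : (1 / 4 : ℝ) * (u t i) ^ 2 ≠ 0 := by
      have := hu0 t i; positivity
    have := hw.log hne
    convert this using 1
    have h0 := hu0 t i
    field_simp [hflow t i]
    rw [hflow t i]; ring_nf
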